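/- Let K and L be convex bodies in ℝⁿ containing the origin, and let p > 1 with Hölder conjugate q. Then the set {(1-λ)^{1/q} x + λ^{1/q} y : x ∈ K, y ∈ L, 0 ≤ λ ≤ 1} equals the convex body whose support function h satisfies h(x)^p = h_K(x)^p + h_L(x)^p for all x ∈ ℝⁿ. -/

import Mathlib

open MeasureTheory Set Function

noncomputable section

abbrev En (n : ℕ) := EuclideanSpace ℝ (Fin n)

/-- the support function of a set `A`:  `h_A(u) = sup {u·y : y ∈ A}` -/
def suppFn {n : ℕ} (A : Set (En n)) (u : En n) : ℝ :=
  sSup ((fun y => (inner ℝ u y : ℝ)) '' A)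

/-- Two-term Hölder inequality. -/
lemma holder_two {p q x y a b : ℝ} (hpq : Real.HolderConjugate p q)
    (hx : 0 ≤ x) (hy : 0 ≤ y) (ha : 0 ≤ a) (hb : 0 ≤ b) :
    a * x + b * y ≤ (x ^ p + y ^ p) ^ p⁻¹ * (a ^ q + b ^ q) ^ q⁻¹ := by
  have := Real.inner_le_Lp_mul_Lq (s := Finset.univ) (f := ![x, y]) (g := ![a, b]) hpq
  simp only [Fin.sum_univ_two, Matrix.cons_val_zero, Matrix.cons_val_one, Matrix.head_cons,
    abs_of_nonneg hx, abs_of_nonneg hy, abs_of_nonneg ha, abs_of_nonneg hb, one_div] at this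
  linarith

/-- combine two points of a convex set with nonnegative weights -/
lemma convex_comb_exists {E : Type*} [AddCommGroup E] [Module ℝ E] {s : Set E}
    (hs : Convex ℝ s) {x₁ x₂ : E} (h₁ : x₁ ∈ s) (h₂ : x₂ ∈ s) {c₁ c₂ : ℝ}
    (hc₁ : 0 ≤ c₁) (hc₂ : 0 ≤ c₂) :
    ∃ X ∈ s, c₁ • x₁ + c₂ • x₂ = (c₁ + c₂) • X := by
  rcases eq_or_lt_of_le (add_nonneg hc₁ hc₂) with h | h
  · have e1 : c₁ = 0 := by linarith
    have e2 : c₂ = 0 := by linarith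
    exact ⟨x₁, h₁, by simp [e1, e2, ← h]⟩
  · refine ⟨(c₁ / (c₁ + c₂)) • x₁ + (c₂ / (c₁ + c₂)) • x₂,
      hs h₁ h₂ (div_nonneg hc₁ h.le) (div_nonneg hc₂ h.le) (by field_simp), ?_⟩
    rw [smul_add, smul_smul, smul_smul, mul_div_cancel₀ _ h.ne', mul_div_cancel₀ _ h.ne']

/-- **The Lutwak–Yang–Zhang pointwise formula for the Firey `L_p` sum**: for convex
bodies `K, L` containing the origin and `p > 1` with Hölder conjugate `q`, the set
`{(1-t)^{1/q} x + t^{1/q} y : x ∈ K, y ∈ L, 0 ≤ t ≤ 1}` is the convex body whose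
support function `h` satisfies `h^p = h_K^p + h_L^p`. Since a compact convex set is
determined by its support function, this is expressed by saying the set is compact,
convex, and its support function satisfies the identity. -/
theorem lyz_pointwise_formula {n : ℕ} (p q : ℝ) (hp : 1 < p) (hpq : p⁻¹ + q⁻¹ = 1)
    (K L : Set (En n)) (hKc : IsCompact K) (hLc : IsCompact L)
    (hKconv : Convex ℝ K) (hLconv : Convex ℝ L)
    (hKint : (interior K).Nonempty) (hLint : (interior L).Nonempty)
    (hK0 : (0 : En n) ∈ K) (hL0 : (0 : En n) ∈ L) :
    IsCompact {z | ∃ x ∈ K, ∃ y ∈ L, ∃ t ∈ Icc (0:ℝ) 1,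
        z = ((1 - t) ^ q⁻¹) • x + (t ^ q⁻¹) • y} ∧
    Convex ℝ {z | ∃ x ∈ K, ∃ y ∈ L, ∃ t ∈ Icc (0:ℝ) 1,
        z = ((1 - t) ^ q⁻¹) • x + (t ^ q⁻¹) • y} ∧
    ∀ u, suppFn {z | ∃ x ∈ K, ∃ y ∈ L, ∃ t ∈ Icc (0:ℝ) 1,
        z = ((1 - t) ^ q⁻¹) • x + (t ^ q⁻¹) • y} u ^ p
      = suppFn K u ^ p + suppFn L u ^ p := by
  have hcj : Real.HolderConjugate p q := Real.holderConjugate_iff.mpr ⟨hp, hpq⟩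
  have hq1 : 1 < q := hcj.symm.lt
  have hq0 : 0 < q := hcj.symm.pos
  have hqi : 0 < q⁻¹ := hcj.symm.inv_pos
  have hp0 : 0 < p := hcj.pos
  set M := {z | ∃ x ∈ K, ∃ y ∈ L, ∃ t ∈ Icc (0:ℝ) 1,
      z = ((1 - t) ^ q⁻¹) • x + (t ^ q⁻¹) • y} with hMdef
  -- alternative description
  have hMS : M = {z | ∃ x ∈ K, ∃ y ∈ L, ∃ a : ℝ, ∃ b : ℝ,
      0 ≤ a ∧ 0 ≤ b ∧ a ^ q + b ^ q ≤ 1 ∧ z = a • x + b • y} := by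
    ext z
    constructor
    · rintro ⟨x, hx, y, hy, t, ⟨ht0, ht1⟩, rfl⟩
      refine ⟨x, hx, y, hy, (1 - t) ^ q⁻¹, t ^ q⁻¹,
        Real.rpow_nonneg (by linarith) _, Real.rpow_nonneg ht0 _, ?_, rfl⟩
      rw [← Real.rpow_mul (by linarith), ← Real.rpow_mul ht0, inv_mul_cancel₀ hq0.ne',
        Real.rpow_one, Real.rpow_one]
      linarith
    · rintro ⟨x, hx, y, hy, a, b, ha, hb, hab, rfl⟩
      have haq : 0 ≤ a ^ q := Real.rpow_nonneg ha _
      have hbq : 0 ≤ b ^ q := Real.rpow_nonneg hb _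
      set t := b ^ q with htdef
      have ht0 : 0 ≤ t := hbq
      have ht1 : t ≤ 1 := by linarith
      have hbt : b = t ^ q⁻¹ := by
        rw [htdef, ← Real.rpow_mul hb, mul_inv_cancel₀ hq0.ne', Real.rpow_one]
      have haA : a ≤ (1 - t) ^ q⁻¹ := by
        have : a = (a ^ q) ^ q⁻¹ := by
          rw [← Real.rpow_mul ha, mul_inv_cancel₀ hq0.ne', Real.rpow_one]
        rw [this]
        exact Real.rpow_le_rpow haq (by linarith) hqi.le
      set A := (1 - t) ^ q⁻¹ with hAdef
      have hA0 : 0 ≤ A := Real.rpow_nonneg (by linarith) _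
      rcases eq_or_lt_of_le hA0 with hA | hA
      · have ha0 : a = 0 := le_antisymm (hA ▸ haA) ha
        exact ⟨x, hx, y, hy, t, ⟨ht0, ht1⟩, by
          simp [ha0, ← hbt, show ((1:ℝ)-t)^q⁻¹ = 0 from hA.symm]⟩
      · refine ⟨(a / A) • x, hKconv.smul_mem_of_zero_mem hK0 hx
          ⟨div_nonneg ha hA0, (div_le_one hA).2 haA⟩, y, hy, t, ⟨ht0, ht1⟩, ?_⟩
        rw [smul_smul, mul_div_cancel₀ _ hA.ne', ← hbt]
  -- compactness
  have hcont : Continuous fun w : En n × En n × ℝ =>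
      ((1 - w.2.2) ^ q⁻¹) • w.1 + (w.2.2 ^ q⁻¹) • w.2.1 := by
    have hr : Continuous fun s : ℝ => s ^ q⁻¹ := Real.continuous_rpow_const hqi.le
    exact ((hr.comp (continuous_const.sub (continuous_snd.comp continuous_snd))).smul
        continuous_fst).add
      ((hr.comp (continuous_snd.comp continuous_snd)).smul (continuous_fst.comp continuous_snd))
  have hMeq : M = (fun w : En n × En n × ℝ =>
      ((1 - w.2.2) ^ q⁻¹) • w.1 + (w.2.2 ^ q⁻¹) • w.2.1) '' (K ×ˢ L ×ˢ Icc (0:ℝ) 1) := by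
    ext z
    constructor
    · rintro ⟨x, hx, y, hy, t, ht, rfl⟩
      exact ⟨(x, y, t), ⟨hx, hy, ht⟩, rfl⟩
    · rintro ⟨⟨x, y, t⟩, ⟨hx, hy, ht⟩, rfl⟩
      exact ⟨x, hx, y, hy, t, ht, rfl⟩
  have hMc : IsCompact M := hMeq ▸ (hKc.prod (hLc.prod isCompact_Icc)).image hcont
  refine ⟨hMc, ?_, ?_⟩
  -- convexity
  · rw [hMS]
    rintro z₁ ⟨x₁, hx₁, y₁, hy₁, a₁, b₁, ha₁, hb₁, hab₁, rfl⟩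
      z₂ ⟨x₂, hx₂, y₂, hy₂, a₂, b₂, ha₂, hb₂, hab₂, rfl⟩ θ₁ θ₂ hθ₁ hθ₂ hθ
    have hconvq := convexOn_rpow hq1.le
    have hAq : (θ₁ * a₁ + θ₂ * a₂) ^ q ≤ θ₁ * a₁ ^ q + θ₂ * a₂ ^ q := by
      have := hconvq.2 (mem_Ici.2 ha₁) (mem_Ici.2 ha₂) hθ₁ hθ₂ hθ
      simpa [smul_eq_mul] using this
    have hBq : (θ₁ * b₁ + θ₂ * b₂) ^ q ≤ θ₁ * b₁ ^ q + θ₂ * b₂ ^ q := by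
      have := hconvq.2 (mem_Ici.2 hb₁) (mem_Ici.2 hb₂) hθ₁ hθ₂ hθ
      simpa [smul_eq_mul] using this
    obtain ⟨X, hX, hXeq⟩ := convex_comb_exists hKconv hx₁ hx₂
      (mul_nonneg hθ₁ ha₁) (mul_nonneg hθ₂ ha₂)
    obtain ⟨Y, hY, hYeq⟩ := convex_comb_exists hLconv hy₁ hy₂
      (mul_nonneg hθ₁ hb₁) (mul_nonneg hθ₂ hb₂)
    refine ⟨X, hX, Y, hY, θ₁ * a₁ + θ₂ * a₂, θ₁ * b₁ + θ₂ * b₂,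
      add_nonneg (mul_nonneg hθ₁ ha₁) (mul_nonneg hθ₂ ha₂),
      add_nonneg (mul_nonneg hθ₁ hb₁) (mul_nonneg hθ₂ hb₂), ?_, ?_⟩
    · calc (θ₁ * a₁ + θ₂ * a₂) ^ q + (θ₁ * b₁ + θ₂ * b₂) ^ q
          ≤ θ₁ * (a₁ ^ q + b₁ ^ q) + θ₂ * (a₂ ^ q + b₂ ^ q) := by ring_nf; linarith
        _ ≤ θ₁ * 1 + θ₂ * 1 := by
            gcongr <;> assumption
        _ = 1 := by linarith
    · rw [← hXeq, ← hYeq, smul_add, smul_add, smul_smul, smul_smul, smul_smul, smul_smul]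
      module
  -- support function
  · intro u
    have hcontU : Continuous fun y : En n => (inner ℝ u y : ℝ) :=
      continuous_const.inner continuous_id
    have bddK : BddAbove ((fun y => (inner ℝ u y : ℝ)) '' K) := (hKc.image hcontU).bddAbove
    have bddL : BddAbove ((fun y => (inner ℝ u y : ℝ)) '' L) := (hLc.image hcontU).bddAbove
    have bddM : BddAbove ((fun y => (inner ℝ u y : ℝ)) '' M) := (hMc.image hcontU).bddAbove
    set hK := suppFn K u with hKdef
    set hL := suppFn L u with hLdef
    have hKnn : 0 ≤ hK := le_csSup bddK ⟨0, hK0, by simp⟩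
    have hLnn : 0 ≤ hL := le_csSup bddL ⟨0, hL0, by simp⟩
    have leK : ∀ x ∈ K, (inner ℝ u x : ℝ) ≤ hK := fun x hx => le_csSup bddK ⟨x, hx, rfl⟩
    have leL : ∀ y ∈ L, (inner ℝ u y : ℝ) ≤ hL := fun y hy => le_csSup bddL ⟨y, hy, rfl⟩
    have hKmem : hK ∈ (fun y => (inner ℝ u y : ℝ)) '' K :=
      (hKc.image hcontU).sSup_mem ⟨_, mem_image_of_mem _ hK0⟩
    have hLmem : hL ∈ (fun y => (inner ℝ u y : ℝ)) '' L :=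
      (hLc.image hcontU).sSup_mem ⟨_, mem_image_of_mem _ hL0⟩
    set s := hK ^ p + hL ^ p with hsdef
    have hsnn : 0 ≤ s := add_nonneg (Real.rpow_nonneg hKnn _) (Real.rpow_nonneg hLnn _)
    set c := s ^ p⁻¹ with hcdef
    have hcnn : 0 ≤ c := Real.rpow_nonneg hsnn _
    have hcp : c ^ p = s := by
      rw [hcdef, ← Real.rpow_mul hsnn, inv_mul_cancel₀ hp0.ne', Real.rpow_one]
    have h0M : (0 : En n) ∈ M := ⟨0, hK0, 0, hL0, 0, ⟨le_refl _, zero_le_one⟩, by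
      simp [Real.zero_rpow hqi.ne']⟩
    -- upper bound
    have hub : ∀ w ∈ (fun y => (inner ℝ u y : ℝ)) '' M, w ≤ c := by
      rintro w ⟨z, hz, rfl⟩
      rw [hMS] at hz
      obtain ⟨x, hx, y, hy, a, b, ha, hb, hab, rfl⟩ := hz
      have hinner : (inner ℝ u (a • x + b • y) : ℝ) = a * inner ℝ u x + b * inner ℝ u y := by
        rw [inner_add_right, real_inner_smul_right, real_inner_smul_right]
      show (inner ℝ u (a • x + b • y) : ℝ) ≤ c
      rw [hinner]
      calc a * (inner ℝ u x : ℝ) + b * inner ℝ u y ≤ a * hK + b * hL := by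
            gcongr
            · exact leK x hx
            · exact leL y hy
        _ ≤ (hK ^ p + hL ^ p) ^ p⁻¹ * (a ^ q + b ^ q) ^ q⁻¹ :=
            holder_two hcj hKnn hLnn ha hb
        _ ≤ c * 1 := by
            rw [← hsdef, ← hcdef]
            gcongr
            exact Real.rpow_le_one (add_nonneg (Real.rpow_nonneg ha _)
              (Real.rpow_nonneg hb _)) hab hqi.le
        _ = c := mul_one c
    -- a point attaining the bound
    have hwit : ∃ z ∈ M, (inner ℝ u z : ℝ) = c := by
      rcases eq_or_lt_of_le hsnn with hs0 | hs0
      · refine ⟨0, h0M, ?_⟩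
        rw [hcdef, ← hs0, Real.zero_rpow (inv_ne_zero hp0.ne'), inner_zero_right]
      · have hcpos : 0 < c := Real.rpow_pos_of_pos hs0 _
        obtain ⟨xs, hxs, hxse⟩ := hKmem
        obtain ⟨ys, hys, hyse⟩ := hLmem
        dsimp only at hxse hyse
        set a := (hK / c) ^ (p - 1) with hadef
        set b := (hL / c) ^ (p - 1) with hbdef
        have ha : 0 ≤ a := Real.rpow_nonneg (div_nonneg hKnn hcnn) _
        have hb : 0 ≤ b := Real.rpow_nonneg (div_nonneg hLnn hcnn) _
        have hcps : c ^ (p - 1) * c = s := by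
          rw [← hcp]
          nth_rewrite 2 [← Real.rpow_one c]
          rw [← Real.rpow_add hcpos]
          norm_num
        have hcp1pos : 0 < c ^ (p - 1) := Real.rpow_pos_of_pos hcpos _
        have haq : a ^ q = hK ^ p / c ^ p := by
          rw [hadef, ← Real.rpow_mul (div_nonneg hKnn hcnn), hcj.sub_one_mul_conj,
            Real.div_rpow hKnn hcnn]
        have hbq : b ^ q = hL ^ p / c ^ p := by
          rw [hbdef, ← Real.rpow_mul (div_nonneg hLnn hcnn), hcj.sub_one_mul_conj,
            Real.div_rpow hLnn hcnn]
        have habs : a ^ q + b ^ q = 1 := by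
          rw [haq, hbq, ← add_div, hcp, ← hsdef, div_self hs0.ne']
        have hval : a * hK + b * hL = c := by
          have e1 : a * hK = hK ^ p / c ^ (p - 1) := by
            rw [hadef, Real.div_rpow hKnn hcnn, div_mul_eq_mul_div]
            congr 1
            nth_rewrite 2 [← Real.rpow_one hK]
            rw [← Real.rpow_add' hKnn (by norm_num; linarith)]
            norm_num
          have e2 : b * hL = hL ^ p / c ^ (p - 1) := by
            rw [hbdef, Real.div_rpow hLnn hcnn, div_mul_eq_mul_div]
            congr 1
            nth_rewrite 2 [← Real.rpow_one hL]
            rw [← Real.rpow_add' hLnn (by norm_num; linarith)]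
            norm_num
          rw [e1, e2, ← add_div, ← hsdef, ← hcps, mul_comm,
            mul_div_assoc, div_self hcp1pos.ne', mul_one]
        refine ⟨a • xs + b • ys, ?_, ?_⟩
        · rw [hMS]
          exact ⟨xs, hxs, ys, hys, a, b, ha, hb, le_of_eq habs, rfl⟩
        · rw [inner_add_right, real_inner_smul_right, real_inner_smul_right, hxse, hyse, hval]
    obtain ⟨zs, hzs, hzse⟩ := hwit
    have hsupM : suppFn M u = c := by
      refine le_antisymm (csSup_le ⟨_, mem_image_of_mem _ h0M⟩ hub) ?_
      rw [← hzse]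
      exact le_csSup bddM ⟨zs, hzs, rfl⟩
    rw [hsupM, hcp]

end
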